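/- Let A be an n-by-n totally positive real matrix and let k ≥ 1. Then the number of positions (i,j) whose entry A i j is among the k largest entries of A is at most (2^k − 1)(2n − 1). -/

import Mathlib

/-- An m-by-n real matrix is totally positive if every minor of it
(of every size) is strictly positive. -/
def TotallyPositive {m n : ℕ} (A : Matrix (Fin m) (Fin n) ℝ) : Prop :=
  ∀ (k : ℕ) (f : Fin k → Fin m) (g : Fin k → Fin n),
    StrictMono f → StrictMono g → 0 < (A.submatrix f g).det

namespace Stmt9
variable {n : ℕ} (A : Matrix (Fin n) (Fin n) ℝ)

noncomputable def rnk (x : ℝ) : ℕ :=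
  ((Finset.univ.image fun r : Fin n × Fin n => A r.1 r.2).filter fun v => x < v).card

lemma sm2 {N : ℕ} {i i' : Fin N} (h : i < i') : StrictMono ![i, i'] := by
  intro a b hab
  fin_cases a <;> fin_cases b <;> simp_all [Matrix.cons_val_zero, Matrix.cons_val_one]

lemma entry_pos (hA : TotallyPositive A) (i j : Fin n) : 0 < A i j := by
  have := hA 1 ![i] ![j]
    (fun a b h => absurd (Subsingleton.elim a b) (ne_of_lt h))
    (fun a b h => absurd (Subsingleton.elim a b) (ne_of_lt h))
  rw [Matrix.det_fin_one] at this
  simpa [Matrix.submatrix_apply] using this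

lemma two_minor (hA : TotallyPositive A) {i i' j j' : Fin n} (hi : i < i') (hj : j < j') :
    A i j' * A i' j < A i j * A i' j' := by
  have := hA 2 ![i, i'] ![j, j'] (sm2 hi) (sm2 hj)
  have h2 : (0:ℝ) < A i j * A i' j' - A i j' * A i' j := by
    rw [Matrix.det_fin_two] at this
    simpa [Matrix.submatrix_apply] using this
  linarith

lemma rnk_succ_le (c : Fin n × Fin n) (x : ℝ) (hx : x < A c.1 c.2) :
    rnk A (A c.1 c.2) + 1 ≤ rnk A x := by
  have hsub : ((Finset.univ.image fun r : Fin n × Fin n => A r.1 r.2).filter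
      fun v => A c.1 c.2 < v) ⊆
      ((Finset.univ.image fun r : Fin n × Fin n => A r.1 r.2).filter fun v => x < v) := by
    intro v hv
    simp only [Finset.mem_filter] at *
    exact ⟨hv.1, lt_trans hx hv.2⟩
  have hmem : A c.1 c.2 ∈ ((Finset.univ.image fun r : Fin n × Fin n => A r.1 r.2).filter
      fun v => x < v) := by
    simp only [Finset.mem_filter, Finset.mem_image]
    exact ⟨⟨c, Finset.mem_univ c, rfl⟩, hx⟩
  have hnot : A c.1 c.2 ∉ ((Finset.univ.image fun r : Fin n × Fin n => A r.1 r.2).filter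
      fun v => A c.1 c.2 < v) := by
    simp
  exact Nat.succ_le_of_lt (Finset.card_lt_card
    ((Finset.ssubset_iff_of_subset hsub).2 ⟨_, hmem, hnot⟩))

lemma crossing (hA : TotallyPositive A) {p q : Fin n × Fin n}
    (h1 : p.1 < q.1) (h2 : q.2 < p.2) :
    ∃ c : Fin n × Fin n, p.1 ≤ c.1 ∧ c.1 ≤ q.1 ∧ q.2 ≤ c.2 ∧ c.2 ≤ p.2 ∧
      min (A p.1 p.2) (A q.1 q.2) < A c.1 c.2 := by
  have hd := two_minor A hA h1 h2
  -- hd : A p.1 p.2 * A q.1 q.2 < A p.1 q.2 * A q.1 p.2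
  set m := min (A p.1 p.2) (A q.1 q.2) with hm
  have hm1 : m ≤ A p.1 p.2 := min_le_left _ _
  have hm2 : m ≤ A q.1 q.2 := min_le_right _ _
  have hmpos : 0 < m := lt_min (entry_pos A hA _ _) (entry_pos A hA _ _)
  have hmm : m * m ≤ A p.1 p.2 * A q.1 q.2 :=
    mul_le_mul hm1 hm2 hmpos.le (entry_pos A hA _ _).le
  by_cases hc : m < A p.1 q.2
  · exact ⟨(p.1, q.2), le_refl _, le_of_lt h1, le_refl _, le_of_lt h2, hc⟩
  · push_neg at hc
    refine ⟨(q.1, p.2), le_of_lt h1, le_refl _, le_of_lt h2, le_refl _, ?_⟩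
    by_contra hle
    push_neg at hle
    have hpos := entry_pos A hA p.1 q.2
    nlinarith

/-- crossing position with rank bound -/
lemma crossing_rnk (hA : TotallyPositive A) {p q : Fin n × Fin n} {K : ℕ}
    (h1 : p.1 < q.1) (h2 : q.2 < p.2)
    (hp : rnk A (A p.1 p.2) ≤ K + 1) (hq : rnk A (A q.1 q.2) ≤ K + 1) :
    ∃ c : Fin n × Fin n, p.1 ≤ c.1 ∧ c.1 ≤ q.1 ∧ q.2 ≤ c.2 ∧ c.2 ≤ p.2 ∧
      rnk A (A c.1 c.2) ≤ K := by
  obtain ⟨c, hc1, hc2, hc3, hc4, hc⟩ := crossing A hA h1 h2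
  refine ⟨c, hc1, hc2, hc3, hc4, ?_⟩
  rcases min_choice (A p.1 p.2) (A q.1 q.2) with he | he <;>
    rw [he] at hc
  · have := rnk_succ_le A c _ hc; omega
  · have := rnk_succ_le A c _ hc; omega

lemma antichain_bound (hA : TotallyPositive A) (K : ℕ) :
    ∀ (m : ℕ) (f : Fin m → Fin n × Fin n),
      (∀ t, rnk A (A (f t).1 (f t).2) ≤ K) →
      (∀ s t : Fin m, s < t → (f s).1 < (f t).1 ∧ (f t).2 < (f s).2) →
      m ≤ 2 ^ (K + 1) - 1 := by
  induction K with
  | zero =>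
    intro m f hr hmono
    by_contra h
    push_neg at h
    have h2 : 1 < m := by omega
    set a : Fin m := ⟨0, by omega⟩ with ha'
    set b : Fin m := ⟨1, by omega⟩ with hb'
    obtain ⟨hi, hj⟩ := hmono a b (by simp [ha', hb', Fin.mk_lt_mk])
    obtain ⟨c, -, -, -, -, hc⟩ := crossing A hA hi hj
    have ha := hr a
    have hb := hr b
    rcases min_choice (A (f a).1 (f a).2) (A (f b).1 (f b).2) with he | he <;>
      rw [he] at hc <;> have := rnk_succ_le A c _ hc <;> omega
  | succ K ih =>
    intro m f hr hmono
    have key : ∀ t : Fin (m / 2), ∃ c : Fin n × Fin n,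
        (f ⟨2*t.1, by omega⟩).1 ≤ c.1 ∧ c.1 ≤ (f ⟨2*t.1+1, by omega⟩).1 ∧
        (f ⟨2*t.1+1, by omega⟩).2 ≤ c.2 ∧ c.2 ≤ (f ⟨2*t.1, by omega⟩).2 ∧
        rnk A (A c.1 c.2) ≤ K := by
      intro t
      have hlt : (⟨2*t.1, by omega⟩ : Fin m) < ⟨2*t.1+1, by omega⟩ := by
        simp [Fin.mk_lt_mk]
      obtain ⟨hi, hj⟩ := hmono _ _ hlt
      exact crossing_rnk A hA hi hj (hr _) (hr _)
    choose g hg1 hg2 hg3 hg4 hg5 using key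
    have hmono' : ∀ s t : Fin (m / 2), s < t → (g s).1 < (g t).1 ∧ (g t).2 < (g s).2 := by
      intro s t hst
      have hst' : (2*s.1+1 : ℕ) < 2*t.1 := by
        have := Fin.lt_def.mp hst; omega
      have hlt : (⟨2*s.1+1, by omega⟩ : Fin m) < ⟨2*t.1, by omega⟩ := by
        simp [Fin.mk_lt_mk]; omega
      obtain ⟨hi, hj⟩ := hmono _ _ hlt
      constructor
      · exact lt_of_le_of_lt (hg2 s) (lt_of_lt_of_le hi (hg1 t))
      · exact lt_of_le_of_lt (hg4 t) (lt_of_lt_of_le hj (hg3 s))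
    have hdiv := ih (m / 2) g hg5 hmono'
    have h1 : 1 ≤ 2 ^ (K + 1) := Nat.one_le_two_pow
    rw [pow_succ]
    generalize 2 ^ (K + 1) = x at h1 hdiv ⊢
    omega

end Stmt9

/-- in an n-by-n totally positive matrix, at most
(2^k − 1)(2n − 1) positions hold entries among the k largest entries, where an
entry is among the k largest if at most k−1 distinct entry values are strictly
larger than it. -/
theorem stmt_9 (n k : ℕ) (hk : 1 ≤ k) (A : Matrix (Fin n) (Fin n) ℝ)
    (hA : TotallyPositive A) :
    (Finset.univ.filter fun q : Fin n × Fin n =>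
        ((Finset.univ.image fun r : Fin n × Fin n => A r.1 r.2).filter
          fun v => A q.1 q.2 < v).card ≤ k - 1).card
      ≤ (2 ^ k - 1) * (2 * n - 1) := by
  obtain ⟨K, rfl⟩ : ∃ K, k = K + 1 := ⟨k - 1, by omega⟩
  set S := (Finset.univ.filter fun q : Fin n × Fin n =>
        ((Finset.univ.image fun r : Fin n × Fin n => A r.1 r.2).filter
          fun v => A q.1 q.2 < v).card ≤ K + 1 - 1) with hS
  rcases Nat.eq_zero_or_pos n with hn | hn
  · subst hn
    have h0 : S.card ≤ 0 :=
      le_trans (Finset.card_le_card (Finset.filter_subset _ _)) (by simp)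
    simpa using h0
  -- fiberwise decomposition by diagonals
  have hmap : ∀ q ∈ S, q.1.1 + q.2.1 ∈ Finset.range (2 * n - 1) := by
    intro q _
    have := q.1.2
    have := q.2.2
    simp only [Finset.mem_range]
    omega
  rw [Finset.card_eq_sum_card_fiberwise hmap]
  have fiber : ∀ a ∈ Finset.range (2 * n - 1),
      (S.filter fun q : Fin n × Fin n => q.1.1 + q.2.1 = a).card ≤ 2 ^ (K + 1) - 1 := by
    intro a _
    set F := S.filter fun q : Fin n × Fin n => q.1.1 + q.2.1 = a with hF
    set G := F.image Prod.fst with hG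
    have hinj : Set.InjOn Prod.fst (F : Set (Fin n × Fin n)) := by
      intro q hq q' hq' hqq
      simp only [hF, Finset.mem_coe, Finset.mem_filter] at hq hq'
      have hv : q.1.1 = q'.1.1 := congrArg Fin.val hqq
      have h2 : q.2 = q'.2 := Fin.ext (by omega)
      exact Prod.ext hqq h2
    have hcard : F.card = G.card := (Finset.card_image_of_injOn hinj).symm
    rw [hcard]
    set e := G.orderIsoOfFin rfl with he
    have key : ∀ t : Fin G.card, ∃ q : Fin n × Fin n, q ∈ F ∧ q.1 = (e t : Fin n) := by
      intro t
      exact Finset.mem_image.mp (e t).2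
    choose f hf1 hf2 using key
    apply Stmt9.antichain_bound A hA K G.card f
    · intro t
      have := hf1 t
      simp only [hF, hS, Finset.mem_filter] at this
      exact this.1.2
    · intro s t hst
      have hsum : (f s).1.1 + (f s).2.1 = a ∧ (f t).1.1 + (f t).2.1 = a := by
        have hs := hf1 s; have ht := hf1 t
        simp only [hF, Finset.mem_filter] at hs ht
        exact ⟨hs.2, ht.2⟩
      have h1 : (f s).1 < (f t).1 := by
        rw [hf2 s, hf2 t]
        exact e.strictMono hst
      refine ⟨h1, ?_⟩
      have := Fin.lt_def.mp h1
      rw [Fin.lt_def]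
      omega
  calc ∑ a ∈ Finset.range (2 * n - 1),
        (S.filter fun q : Fin n × Fin n => q.1.1 + q.2.1 = a).card
      ≤ ∑ _a ∈ Finset.range (2 * n - 1), (2 ^ (K + 1) - 1) :=
        Finset.sum_le_sum fiber
    _ = (2 * n - 1) * (2 ^ (K + 1) - 1) := by
        rw [Finset.sum_const, Finset.card_range, smul_eq_mul]
    _ = (2 ^ (K + 1) - 1) * (2 * n - 1) := mul_comm _ _
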